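/- (Hermite–Padé simultaneous approximation.) Let q ≥ 1, let K > 0, let μ_1, …, μ_q be finite Borel measures on ℝ each supported in the interval [−K, K], let B_1, …, B_q ∈ ℝ[x] be polynomials, and let m ∈ ℕ. Assume the orthogonality conditions ∑_{b=1}^{q} ∫ x^k · B_b(x) dμ_b(x) = 0 for every k ∈ {0,…,m−1}. Then there exist constants C ≥ 0 and R₀ > K such that for every real z with |z| ≥ R₀: |∑_{b=1}^{q} B_b(z) · ∫ (z − x)⁻¹ dμ_b(x) − ∑_{b=1}^{q} ∫ (B_b(z) − B_b(x))/(z − x) dμ_b(x)| ≤ C · |z|^{−(m+1)}. -/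

import Mathlib

open MeasureTheory Finset

lemma hp_integrable (μ : Measure ℝ) [IsFiniteMeasure μ] {S : Set ℝ}
    (hae : ∀ᵐ x ∂μ, x ∈ S) {f : ℝ → ℝ} (hf : Measurable f) {C : ℝ}
    (h : ∀ x ∈ S, |f x| ≤ C) : Integrable f μ :=
  (integrable_const C).mono' hf.aestronglyMeasurable
    (hae.mono fun x hx => by simpa [Real.norm_eq_abs] using h x hx)

lemma hp_expand (z x : ℝ) (hz : z ≠ 0) (hzx : z - x ≠ 0) (m : ℕ) (b : ℝ) :
    b * (z - x)⁻¹ =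
      (∑ k ∈ range m, (z ^ (k + 1))⁻¹ * (x ^ k * b)) +
        (z ^ m)⁻¹ * (x ^ m * b * (z - x)⁻¹) := by
  induction m with
  | zero => simp
  | succ n ih =>
      rw [Finset.sum_range_succ, ih]
      have : (z ^ n)⁻¹ * (x ^ n * b * (z - x)⁻¹) =
          (z ^ (n + 1))⁻¹ * (x ^ n * b) +
            (z ^ (n + 1))⁻¹ * (x ^ (n + 1) * b * (z - x)⁻¹) := by
        field_simp
        ring
      rw [this]; ring

theorem hermite_pade_simultaneous_approximation
    (q : ℕ) (hq : 1 ≤ q) (K : ℝ) (hK : 0 < K)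
    (μ : Fin q → Measure ℝ)
    (hfin : ∀ b, IsFiniteMeasure (μ b))
    (hsupp : ∀ b, μ b ((Set.Icc (-K) K)ᶜ) = 0)
    (B : Fin q → Polynomial ℝ) (m : ℕ)
    (horth : ∀ k, k < m → ∑ b, ∫ x, x ^ k * (B b).eval x ∂(μ b) = 0) :
    ∃ C : ℝ, 0 ≤ C ∧ ∃ R₀ : ℝ, K < R₀ ∧ ∀ z : ℝ, R₀ ≤ |z| →
      |(∑ b, (B b).eval z * ∫ x, (z - x)⁻¹ ∂(μ b))
          - ∑ b, ∫ x, ((B b).eval z - (B b).eval x) / (z - x) ∂(μ b)|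
        ≤ C * |z| ^ (-((m : ℤ) + 1)) := by
  classical
  haveI := hfin
  set S : Set ℝ := Set.Icc (-K) K with hSdef
  have hae : ∀ b, ∀ᵐ x ∂(μ b), x ∈ S := fun b => by
    exact MeasureTheory.mem_ae_iff.mpr (hsupp b)
  -- bound on each polynomial over S
  have hCb : ∀ b : Fin q, ∃ Cb : ℝ, 0 ≤ Cb ∧ ∀ x ∈ S, |(B b).eval x| ≤ Cb := by
    intro b
    obtain ⟨Cb, hCb⟩ := isCompact_Icc.exists_bound_of_continuousOn
      ((B b).continuous.continuousOn : ContinuousOn (fun x => (B b).eval x) S)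
    have h0 : (0 : ℝ) ∈ S := by
      simp only [hSdef, Set.mem_Icc]; constructor <;> linarith
    exact ⟨Cb, le_trans (norm_nonneg _) (hCb 0 h0), fun x hx => hCb x hx⟩
  choose Cb hCb0 hCbb using hCb
  set C : ℝ := ∑ b : Fin q, 2 * K ^ m * Cb b * ((μ b) Set.univ).toReal with hCdef
  have hC0 : 0 ≤ C := Finset.sum_nonneg fun b _ =>
    mul_nonneg (mul_nonneg (by positivity) (hCb0 b)) ENNReal.toReal_nonneg
  refine ⟨C, hC0, 2 * K + 1, by linarith, fun z hz => ?_⟩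
  have hz1 : (1 : ℝ) ≤ |z| := by linarith
  have hz0 : (0 : ℝ) < |z| := by linarith
  have hzne : z ≠ 0 := fun h => by simp [h] at hz0
  -- bounds on (z - x)⁻¹ for x ∈ S
  have hxK : ∀ x ∈ S, |x| ≤ K := fun x hx => abs_le.mpr ⟨hx.1, hx.2⟩
  have hzx : ∀ x ∈ S, |z| / 2 ≤ |z - x| := by
    intro x hx
    have h1 : |z| - |x| ≤ |z - x| := abs_sub_abs_le_abs_sub z x
    have := hxK x hx
    linarith
  have hzxne : ∀ x ∈ S, z - x ≠ 0 := by
    intro x hx h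
    have := hzx x hx
    rw [h, abs_zero] at this
    linarith
  have hinv : ∀ x ∈ S, |(z - x)⁻¹| ≤ 2 / |z| := by
    intro x hx
    rw [abs_inv]
    calc |z - x|⁻¹ ≤ (|z| / 2)⁻¹ :=
          inv_anti₀ (by linarith) (hzx x hx)
      _ = 2 / |z| := by rw [inv_div]
  -- measurability pieces
  have mes_inv : Measurable fun x : ℝ => (z - x)⁻¹ :=
    (measurable_const.sub measurable_id).inv
  have mes_eval : ∀ b, Measurable fun x : ℝ => (B b).eval x := fun b =>
    (B b).continuous.measurable
  -- integrability
  have hInt1 : ∀ b, Integrable (fun x => (z - x)⁻¹) (μ b) := fun b =>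
    hp_integrable (μ b) (hae b) mes_inv hinv
  have hInt2 : ∀ b, Integrable (fun x => ((B b).eval z - (B b).eval x) / (z - x)) (μ b) := by
    intro b
    refine hp_integrable (μ b) (hae b)
      ((measurable_const.sub (mes_eval b)).div (measurable_const.sub measurable_id))
      (C := (|(B b).eval z| + Cb b) * (2 / |z|)) ?_
    intro x hx
    rw [div_eq_mul_inv, abs_mul]
    apply mul_le_mul _ (hinv x hx) (abs_nonneg _) (add_nonneg (abs_nonneg _) (hCb0 b))
    calc |(B b).eval z - (B b).eval x| ≤ |(B b).eval z| + |(B b).eval x| := abs_sub _ _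
      _ ≤ |(B b).eval z| + Cb b := by linarith [hCbb b x hx]

  have hInt3 : ∀ b, Integrable (fun x => (B b).eval x * (z - x)⁻¹) (μ b) := by
    intro b
    refine hp_integrable (μ b) (hae b) ((mes_eval b).mul mes_inv)
      (C := Cb b * (2 / |z|)) ?_
    intro x hx
    rw [abs_mul]
    exact mul_le_mul (hCbb b x hx) (hinv x hx) (abs_nonneg _) (hCb0 b)
  have hInt4 : ∀ b k, Integrable (fun x => x ^ k * (B b).eval x) (μ b) := by
    intro b k
    refine hp_integrable (μ b) (hae b) ((measurable_id.pow_const k).mul (mes_eval b))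
      (C := K ^ k * Cb b) ?_
    intro x hx
    rw [abs_mul, abs_pow]
    exact mul_le_mul (pow_le_pow_left₀ (abs_nonneg x) (hxK x hx) k) (hCbb b x hx)
      (abs_nonneg _) (pow_nonneg hK.le _)
  have hInt5 : ∀ b, Integrable (fun x => x ^ m * (B b).eval x * (z - x)⁻¹) (μ b) := by
    intro b
    refine hp_integrable (μ b) (hae b)
      (((measurable_id.pow_const m).mul (mes_eval b)).mul mes_inv)
      (C := K ^ m * Cb b * (2 / |z|)) ?_
    intro x hx
    rw [abs_mul, abs_mul, abs_pow]
    apply mul_le_mul _ (hinv x hx) (abs_nonneg _) (mul_nonneg (pow_nonneg hK.le _) (hCb0 b))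
    exact mul_le_mul (pow_le_pow_left₀ (abs_nonneg x) (hxK x hx) m) (hCbb b x hx)
      (abs_nonneg _) (pow_nonneg hK.le _)
  -- Step 1: combine each pair of integrals
  have step1 : ∀ b, (B b).eval z * ∫ x, (z - x)⁻¹ ∂(μ b)
      - ∫ x, ((B b).eval z - (B b).eval x) / (z - x) ∂(μ b)
      = ∫ x, (B b).eval x * (z - x)⁻¹ ∂(μ b) := by
    intro b
    rw [← integral_const_mul, ← integral_sub ((hInt1 b).const_mul _) (hInt2 b)]
    apply integral_congr_ae
    filter_upwards with x
    ring
  -- Step 3: geometric expansion of each integral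
  have step3 : ∀ b, ∫ x, (B b).eval x * (z - x)⁻¹ ∂(μ b)
      = (∑ k ∈ range m, (z ^ (k + 1))⁻¹ * ∫ x, x ^ k * (B b).eval x ∂(μ b))
        + (z ^ m)⁻¹ * ∫ x, x ^ m * (B b).eval x * (z - x)⁻¹ ∂(μ b) := by
    intro b
    have hcong : ∫ x, (B b).eval x * (z - x)⁻¹ ∂(μ b)
        = ∫ x, ((∑ k ∈ range m, (z ^ (k + 1))⁻¹ * (x ^ k * (B b).eval x))
            + (z ^ m)⁻¹ * (x ^ m * (B b).eval x * (z - x)⁻¹)) ∂(μ b) :=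
      integral_congr_ae ((hae b).mono fun x hx =>
        hp_expand z x hzne (hzxne x hx) m ((B b).eval x))
    rw [hcong, integral_add
        (integrable_finset_sum _ fun k _ => (hInt4 b k).const_mul _)
        ((hInt5 b).const_mul _),
      integral_finset_sum _ fun k _ => (hInt4 b k).const_mul _,
      integral_const_mul]
    simp_rw [integral_const_mul]
  -- combine, swap sums, apply orthogonality
  have key : (∑ b, (B b).eval z * ∫ x, (z - x)⁻¹ ∂(μ b))
      - ∑ b, ∫ x, ((B b).eval z - (B b).eval x) / (z - x) ∂(μ b)
      = (z ^ m)⁻¹ * ∑ b, ∫ x, x ^ m * (B b).eval x * (z - x)⁻¹ ∂(μ b) := by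
    rw [← Finset.sum_sub_distrib]
    calc ∑ b, ((B b).eval z * ∫ x, (z - x)⁻¹ ∂(μ b)
          - ∫ x, ((B b).eval z - (B b).eval x) / (z - x) ∂(μ b))
        = ∑ b, ((∑ k ∈ range m, (z ^ (k + 1))⁻¹ * ∫ x, x ^ k * (B b).eval x ∂(μ b))
            + (z ^ m)⁻¹ * ∫ x, x ^ m * (B b).eval x * (z - x)⁻¹ ∂(μ b)) := by
          exact Finset.sum_congr rfl fun b _ => by rw [step1 b, step3 b]
      _ = (∑ k ∈ range m, (z ^ (k + 1))⁻¹ * ∑ b, ∫ x, x ^ k * (B b).eval x ∂(μ b))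
            + (z ^ m)⁻¹ * ∑ b, ∫ x, x ^ m * (B b).eval x * (z - x)⁻¹ ∂(μ b) := by
          rw [Finset.sum_add_distrib, Finset.sum_comm]
          simp_rw [← Finset.mul_sum]
      _ = (z ^ m)⁻¹ * ∑ b, ∫ x, x ^ m * (B b).eval x * (z - x)⁻¹ ∂(μ b) := by
          rw [Finset.sum_congr rfl fun k hk => by
            rw [horth k (Finset.mem_range.mp hk), mul_zero]]
          simp
  rw [key]
  -- final bound
  have hbound : ∀ b, |∫ x, x ^ m * (B b).eval x * (z - x)⁻¹ ∂(μ b)|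
      ≤ K ^ m * Cb b * (2 / |z|) * ((μ b) Set.univ).toReal := by
    intro b
    have := norm_integral_le_of_norm_le_const (μ := μ b)
      (f := fun x => x ^ m * (B b).eval x * (z - x)⁻¹)
      (C := K ^ m * Cb b * (2 / |z|)) ?_
    · simpa [Real.norm_eq_abs, measureReal_def] using this
    · filter_upwards [hae b] with x hx
      rw [Real.norm_eq_abs, abs_mul, abs_mul, abs_pow]
      apply mul_le_mul _ (hinv x hx) (abs_nonneg _) (mul_nonneg (pow_nonneg hK.le _) (hCb0 b))
      exact mul_le_mul (pow_le_pow_left₀ (abs_nonneg x) (hxK x hx) m) (hCbb b x hx)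
        (abs_nonneg _) (pow_nonneg hK.le _)
  have hzpow : |z| ^ (-((m : ℤ) + 1)) = ((|z| ^ m)⁻¹) * (2 / |z|) / 2 := by
    have : (-((m : ℤ) + 1)) = -((m + 1 : ℕ) : ℤ) := by push_cast; ring
    rw [this, zpow_neg, zpow_natCast, pow_succ]
    field_simp
  calc |(z ^ m)⁻¹ * ∑ b, ∫ x, x ^ m * (B b).eval x * (z - x)⁻¹ ∂(μ b)|
      = (|z| ^ m)⁻¹ * |∑ b, ∫ x, x ^ m * (B b).eval x * (z - x)⁻¹ ∂(μ b)| := by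
        rw [abs_mul, abs_inv, abs_pow]
    _ ≤ (|z| ^ m)⁻¹ * ∑ b, K ^ m * Cb b * (2 / |z|) * ((μ b) Set.univ).toReal := by
        apply mul_le_mul_of_nonneg_left _ (by positivity)
        exact le_trans (Finset.abs_sum_le_sum_abs _ _)
          (Finset.sum_le_sum fun b _ => hbound b)
    _ = C * |z| ^ (-((m : ℤ) + 1)) := by
        rw [hzpow, hCdef, Finset.sum_mul]
        rw [Finset.mul_sum]
        apply Finset.sum_congr rfl
        intro b _
        field_simp
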